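/- For every positive integer g, every prime power q, and integer h ≥ 2, if there exists a positive integer d dividing h with d ≠ h and q^d ≡ 1 (mod g), then there exists a B_h[g] set in Z/((q^h − 1)/g)Z with exactly q elements. -/

import Mathlib

open Polynomial

/-- Additive `B_h[g]` property. -/
def IsBhg {G : Type*} [AddCommMonoid G] (A : Set G) (h g : ℕ) : Prop :=
  ∀ b : G, ∀ s : Finset (Multiset G),
    (∀ m ∈ s, Multiset.card m = h ∧ (∀ x ∈ m, x ∈ A) ∧ m.sum = b) → s.card ≤ g

section BC
variable {K : Type*} [Field K]

lemma BC_adjoin_top (F : Subfield K) (θ : K)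
    (hgen : ∀ x : K, x ≠ 0 → ∃ n : ℕ, θ ^ n = x) :
    IntermediateField.adjoin F {θ} = ⊤ := by
  rw [eq_top_iff]
  rintro x -
  by_cases hx : x = 0
  · exact hx ▸ zero_mem _
  · obtain ⟨n, rfl⟩ := hgen x hx
    exact pow_mem (IntermediateField.mem_adjoin_simple_self F θ) n

lemma BC_small_poly [Finite K] (F : Subfield K) (θ : K)
    (hgen : ∀ x : K, x ≠ 0 → ∃ n : ℕ, θ ^ n = x)
    (P : Polynomial F) (hP : P ≠ 0) (hdeg : P.natDegree < Module.finrank F K) :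
    Polynomial.aeval θ P ≠ 0 := by
  intro h0
  have hfin : Module.Finite F K := Module.finite_iff_finite.mpr ‹Finite K›
  have hint : IsIntegral F θ := IsIntegral.of_finite F θ
  have h1 : (minpoly F θ).natDegree = Module.finrank F K := by
    rw [← IntermediateField.adjoin.finrank hint, BC_adjoin_top F θ hgen,
      IntermediateField.finrank_top']
  have h2 := minpoly.degree_le_of_ne_zero F θ hP h0
  have h3 := Polynomial.natDegree_le_natDegree h2
  omega

lemma BC_multiset_eq [Finite K] (F : Subfield K) (θ : K)
    (hgen : ∀ x : K, x ≠ 0 → ∃ n : ℕ, θ ^ n = x)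
    {h : ℕ} (hfin : Module.finrank F K = h)
    (s t : Multiset F) (hs : Multiset.card s = h) (ht : Multiset.card t = h)
    (heq : (s.map fun a : F => θ - (a : K)).prod = (t.map fun a : F => θ - (a : K)).prod) :
    s = t := by
  classical
  set P : Polynomial F := (s.map fun a => X - C a).prod with hPdef
  set Q : Polynomial F := (t.map fun a => X - C a).prod with hQdef
  have hmonP : P.Monic := monic_multiset_prod_of_monic _ _ (fun a _ => monic_X_sub_C a)
  have hmonQ : Q.Monic := monic_multiset_prod_of_monic _ _ (fun a _ => monic_X_sub_C a)
  have hdegP : P.natDegree = h := by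
    rw [hPdef, natDegree_multiset_prod' _ ?_, Multiset.map_map]
    · simp [Function.comp_def, natDegree_X_sub_C, hs, Multiset.map_const',
        Multiset.sum_replicate]
    · rw [Multiset.map_map]
      simp [Function.comp_def, monic_X_sub_C, (monic_X_sub_C _).leadingCoeff]
  have hdegQ : Q.natDegree = h := by
    rw [hQdef, natDegree_multiset_prod' _ ?_, Multiset.map_map]
    · simp [Function.comp_def, natDegree_X_sub_C, ht, Multiset.map_const',
        Multiset.sum_replicate]
    · rw [Multiset.map_map]
      simp [Function.comp_def, monic_X_sub_C, (monic_X_sub_C _).leadingCoeff]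
  have haP : Polynomial.aeval θ P = (s.map fun a : F => θ - (a : K)).prod := by
    rw [hPdef, map_multiset_prod, Multiset.map_map]
    congr 1
    exact Multiset.map_congr rfl fun a _ => by simp [Subalgebra.algebraMap_eq]; rfl
  have haQ : Polynomial.aeval θ Q = (t.map fun a : F => θ - (a : K)).prod := by
    rw [hQdef, map_multiset_prod, Multiset.map_map]
    congr 1
    exact Multiset.map_congr rfl fun a _ => by simp [Subalgebra.algebraMap_eq]; rfl
  have hPQ : P = Q := by
    by_contra hne
    have hsub : P - Q ≠ 0 := sub_ne_zero_of_ne hne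
    have hdlt : (P - Q).natDegree < h := by
      have h1 : P.degree = Q.degree := by
        rw [degree_eq_natDegree hmonP.ne_zero, degree_eq_natDegree hmonQ.ne_zero, hdegP, hdegQ]
      have h2 : (P - Q).degree < P.degree :=
        degree_sub_lt h1 hmonP.ne_zero (hmonP.leadingCoeff.trans hmonQ.leadingCoeff.symm)
      rw [degree_eq_natDegree hmonP.ne_zero, hdegP] at h2
      exact (natDegree_lt_iff_degree_lt hsub).mpr h2
    refine BC_small_poly F θ hgen (P - Q) hsub (by rw [hfin]; exact hdlt) ?_
    rw [map_sub, haP, haQ, heq, sub_self]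
  have : P.roots = s := roots_multiset_prod_X_sub_C s
  rw [hPQ, hQdef, roots_multiset_prod_X_sub_C t] at this
  exact this.symm


theorem stmt_15 (g q h : ℕ) (hg : 1 ≤ g) (hq : IsPrimePow q) (hh : 2 ≤ h)
    (hd : ∃ d : ℕ, 0 < d ∧ d ∣ h ∧ d ≠ h ∧ q ^ d ≡ 1 [MOD g]) :
    ∃ A : Set (ZMod ((q ^ h - 1) / g)), IsBhg A h g ∧ A.ncard = q := by
  classical
  obtain ⟨p, e, hp, he, hpq⟩ := hq
  have hp' : p.Prime := hp.nat_prime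
  haveI : Fact p.Prime := ⟨hp'⟩
  have hq2 : 2 ≤ q := by
    rw [← hpq]; calc 2 ≤ p := hp'.two_le
    _ ≤ p ^ e := Nat.le_self_pow he.ne' p
  obtain ⟨d, hd0, hdvd, hdne, hmod⟩ := hd
  have hh0 : 0 < h := by omega
  have hdlth : d < h := lt_of_le_of_ne (Nat.le_of_dvd hh0 hdvd) hdne
  -- divisibility chain
  have hgqd : g ∣ q ^ d - 1 := (Nat.modEq_iff_dvd' (Nat.one_le_pow _ _ (by omega))).mp hmod.symm
  have hqdM : q ^ d - 1 ∣ q ^ h - 1 := by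
    obtain ⟨c, rfl⟩ := hdvd
    simpa [one_pow, ← pow_mul] using Nat.sub_dvd_pow_sub_pow (q ^ d) 1 c
  set M := q ^ h - 1 with hMdef
  set N := M / g with hNdef
  have hgM : g ∣ M := hgqd.trans hqdM
  have hM0 : 0 < M := by
    have : 2 ^ 2 ≤ q ^ h := Nat.pow_le_pow_left hq2 2 |>.trans (Nat.pow_le_pow_right (by omega) hh)
    omega
  have hMN : M = N * g := (Nat.div_mul_cancel hgM).symm
  have hN0 : 0 < N := by
    rcases Nat.eq_zero_or_pos N with h0 | h0
    · rw [h0, zero_mul] at hMN; omega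
    · exact h0
  haveI : NeZero N := ⟨hN0.ne'⟩
  haveI : NeZero M := ⟨hM0.ne'⟩
  have hqd_lt : q ^ d - 1 < M := by
    have := Nat.pow_lt_pow_right hq2 hdlth
    have h1 : 1 ≤ q ^ d := Nat.one_le_pow _ _ (by omega)
    omega
  -- the field
  set K : Type := GaloisField p (e * h) with hKdef
  haveI : Fintype K := Fintype.ofFinite K
  have hKcard : Fintype.card K = q ^ h := by
    rw [← Nat.card_eq_fintype_card, hKdef, GaloisField.card p (e * h) (by positivity),
      pow_mul, hpq]
  -- generator of the unit group
  obtain ⟨u, hu⟩ := IsCyclic.exists_generator (α := Kˣ)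
  set θ : K := (u : K) with hθdef
  have hθ0 : θ ≠ 0 := Units.ne_zero u
  have hord : orderOf θ = M := by
    rw [hθdef, orderOf_units, orderOf_eq_card_of_forall_mem_zpowers hu,
      Nat.card_eq_fintype_card, Fintype.card_units, hKcard]
  have hordu : orderOf u = M := by rwa [hθdef, orderOf_units] at hord
  have hgen : ∀ x : K, x ≠ 0 → ∃ n : ℕ, θ ^ n = x := by
    intro x hx
    obtain ⟨n, hn⟩ := mem_powers_iff_mem_zpowers.mpr (hu (Units.mk0 x hx))
    have hn' : u ^ n = Units.mk0 x hx := hn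
    exact ⟨n, by rw [hθdef, ← Units.val_pow_eq_pow_val, hn', Units.val_mk0]⟩
  -- discrete exponential
  set E : ZMod M → K := fun n => ((u ^ n.val : Kˣ) : K) with hEdef
  have hEu : ∀ (a : ZMod M) (n : ℕ), a.val ≡ n [MOD M] → E a = ((u ^ n : Kˣ) : K) := by
    intro a n han
    rw [hEdef]
    dsimp only
    congr 1
    exact pow_eq_pow_iff_modEq.mpr (by rwa [hordu])
  have hEadd : ∀ a b : ZMod M, E (a + b) = E a * E b := by
    intro a b
    rw [hEu (a + b) (a.val + b.val) (by rw [ZMod.val_add]; exact Nat.mod_modEq _ M),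
      pow_add, Units.val_mul]
  have hEinj : Function.Injective E := by
    intro a b hab
    have h2 : u ^ a.val = u ^ b.val := Units.ext hab
    have h3 := pow_eq_pow_iff_modEq.mp h2
    rw [hordu] at h3
    have h1 : a.val % M = b.val % M := h3
    rw [Nat.mod_eq_of_lt (ZMod.val_lt a), Nat.mod_eq_of_lt (ZMod.val_lt b)] at h1
    exact ZMod.val_injective M h1
  have hE0 : E 0 = 1 := by rw [hEdef]; simp [ZMod.val_zero]
  have hEsum : ∀ m : Multiset (ZMod M), E m.sum = (m.map E).prod := by
    intro m
    induction m using Multiset.induction with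
    | empty => simpa using hE0
    | cons a m ih => rw [Multiset.sum_cons, hEadd, ih, Multiset.map_cons, Multiset.prod_cons]
  have hEsurj : ∀ x : K, x ≠ 0 → ∃ n : ZMod M, E n = x := by
    intro x hx
    obtain ⟨n, hn⟩ := mem_powers_iff_mem_zpowers.mpr (hu (Units.mk0 x hx))
    have hn' : u ^ n = Units.mk0 x hx := hn
    refine ⟨(n : ZMod M), ?_⟩
    rw [hEu _ n (by rw [ZMod.val_natCast]; exact Nat.mod_modEq _ M), hn', Units.val_mk0]
  -- the subfield of q-th power fixed points
  have hq0 : q ≠ 0 := by omega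
  set σ1 : K →+* K := iterateFrobenius K p e with hσ1def
  have hσ1 : ∀ x : K, σ1 x = x ^ q := by
    intro x; rw [hσ1def, iterateFrobenius_def, hpq]
  set F : Subfield K :=
    { carrier := {x : K | x ^ q = x}
      mul_mem' := fun {a b} ha hb => by
        simp only [Set.mem_setOf_eq, mul_pow] at *; rw [ha, hb]
      one_mem' := by simp
      add_mem' := fun {a b} ha hb => by
        simp only [Set.mem_setOf_eq, ← hσ1] at *
        rw [map_add, ha, hb]
      zero_mem' := by simp [zero_pow hq0]
      neg_mem' := fun {a} ha => by
        simp only [Set.mem_setOf_eq, ← hσ1] at *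
        rw [map_neg, ha]
      inv_mem' := fun a ha => by
        simp only [Set.mem_setOf_eq, ← hσ1] at *
        rw [map_inv₀, ha] } with hFdef
  have hFmem : ∀ x : K, x ∈ F ↔ x ^ q = x := fun x => Iff.rfl
  -- cardinality of F
  have hprim : IsPrimitiveRoot θ M := hord ▸ IsPrimitiveRoot.orderOf θ
  have hq1M : q - 1 ∣ M := by
    simpa [one_pow] using Nat.sub_dvd_pow_sub_pow q 1 h
  have hq10 : 0 < q - 1 := by omega
  have hζ : IsPrimitiveRoot (θ ^ (M / (q - 1))) (q - 1) :=
    hprim.pow hM0 (Nat.div_mul_cancel hq1M).symm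
  have hFcard : Nat.card F = q := by
    have hset : (F : Set K) = ↑(insert (0 : K) (nthRootsFinset (q - 1) (1 : K))) := by
      ext x
      simp only [SetLike.mem_coe, hFmem, Finset.coe_insert, Set.mem_insert_iff,
        Finset.mem_coe, mem_nthRootsFinset hq10]
      constructor
      · intro hx
        rcases eq_or_ne x 0 with h0 | h0
        · exact Or.inl h0
        · refine Or.inr ?_
          have : x ^ (q - 1) * x = x := by
            rw [← pow_succ]
            have : q - 1 + 1 = q := by omega
            rw [this]; exact hx
          have h2 : x ^ (q - 1) * x = 1 * x := by rw [this, one_mul]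
          exact mul_right_cancel₀ h0 h2
      · rintro (rfl | hx)
        · simp [zero_pow hq0]
        · have : x ^ q = x ^ (q - 1) * x := by
            rw [← pow_succ]
            congr 1
            omega
          rw [this, hx, one_mul]
    have h0nr : (0 : K) ∉ nthRootsFinset (q - 1) (1 : K) := by
      intro h0
      have := (mem_nthRootsFinset hq10 (1 : K)).mp h0
      rw [zero_pow (by omega : q - 1 ≠ 0)] at this
      exact zero_ne_one this
    have h1 : Nat.card F = (F : Set K).ncard := (Nat.card_coe_set_eq _).symm
    rw [h1, hset, Set.ncard_coe_finset, Finset.card_insert_of_notMem h0nr,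
      hζ.card_nthRootsFinset]
    omega
  -- finrank
  haveI : Fintype F := Fintype.ofFinite F
  have hFcard' : Fintype.card F = q := by rw [← Nat.card_eq_fintype_card, hFcard]
  have hfinrank : Module.finrank F K = h := by
    have hcard := Module.card_eq_pow_finrank (K := F) (V := K)
    rw [hKcard, hFcard'] at hcard
    exact (Nat.pow_right_injective hq2 hcard.symm)
  -- θ is not in F
  have hθF : ∀ r : F, θ - (r : K) ≠ 0 := by
    intro r hcontra
    have hθr : θ = (r : K) := by linear_combination hcontra
    have h1 : θ ^ q = θ := by rw [hθr]; exact r.2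
    have h2 : θ ^ (q - 1) * θ = 1 * θ := by
      rw [← pow_succ, one_mul]
      have : q - 1 + 1 = q := by omega
      rw [this, h1]
    have h3 : θ ^ (q - 1) = 1 := mul_right_cancel₀ hθ0 h2
    have h4 : M ∣ q - 1 := hord ▸ orderOf_dvd_of_pow_eq_one h3
    have h5 : M ≤ q - 1 := Nat.le_of_dvd hq10 h4
    have h6 : q < q ^ h := by
      calc q = q ^ 1 := (pow_one q).symm
      _ < q ^ h := Nat.pow_lt_pow_right hq2 (by omega)
    omega
  -- the logarithm of θ - r
  have hlfun : ∀ r : F, ∃ n : ZMod M, E n = θ - (r : K) := fun r => hEsurj _ (hθF r)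
  set lfun : F → ZMod M := fun r => (hlfun r).choose with hlfundef
  have hlspec : ∀ r : F, E (lfun r) = θ - (r : K) := fun r => (hlfun r).choose_spec
  -- the projection
  have hNM : N ∣ M := ⟨g, hMN⟩
  set π : ZMod M →+* ZMod N := ZMod.castHom hNM (ZMod N) with hπdef
  have hπval : ∀ y : ZMod M, π y = ((y.val : ℕ) : ZMod N) := by
    intro y
    rw [hπdef, ZMod.castHom_apply, ← ZMod.natCast_val]
  -- key injectivity
  have hπinj : Function.Injective (fun r : F => π (lfun r)) := by
    intro r₁ r₂ hr
    dsimp only at hr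
    -- the quotient c
    set c : K := (θ - (r₁ : K)) / (θ - (r₂ : K)) with hcdef
    have hc2 : c * (θ - (r₂ : K)) = θ - (r₁ : K) := div_mul_cancel₀ _ (hθF r₂)
    have hcg : c ^ g = 1 := by
      have hmodN : (lfun r₁).val ≡ (lfun r₂).val [MOD N] := by
        have := hπval (lfun r₁) ▸ hπval (lfun r₂) ▸ hr
        exact (ZMod.natCast_eq_natCast_iff _ _ _).mp this
      have hmodM : (lfun r₁).val * g ≡ (lfun r₂).val * g [MOD M] := by
        have h0 := Nat.ModEq.mul_right' (c := g) hmodN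
        rwa [← hMN] at h0
      have hpow : ((u ^ ((lfun r₁).val * g) : Kˣ) : K) = ((u ^ ((lfun r₂).val * g) : Kˣ) : K) := by
        congr 1
        exact pow_eq_pow_iff_modEq.mpr (by rwa [hordu])
      have h1 : (E (lfun r₁)) ^ g = (E (lfun r₂)) ^ g := by
        rw [hEdef]
        dsimp only
        rw [← Units.val_pow_eq_pow_val, ← Units.val_pow_eq_pow_val, ← pow_mul, ← pow_mul]
        exact hpow
      rw [hlspec, hlspec] at h1
      rw [hcdef, div_pow, h1, div_self (pow_ne_zero g (hθF r₂))]
    -- fixed points of x ↦ x^(q^d)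
    have hfix : ∀ x : K, x ^ q = x → ∀ k : ℕ, x ^ (q ^ k) = x := by
      intro x hx k
      induction k with
      | zero => simp
      | succ k ih => rw [pow_succ, pow_mul, ih, hx]
    have hcqd : c ^ (q ^ d) = c := by
      have h1 : c ^ (q ^ d - 1) = 1 := by
        obtain ⟨k, hk⟩ := hgqd
        rw [hk, pow_mul, hcg, one_pow]
      calc c ^ (q ^ d) = c ^ (q ^ d - 1) * c := by
            rw [← pow_succ]
            congr 1
            have : 0 < q ^ d := Nat.one_le_pow _ _ (by omega)
            omega
      _ = c := by rw [h1, one_mul]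
    set σ : K →+* K := iterateFrobenius K p (e * d) with hσdef
    have hσq : ∀ x : K, σ x = x ^ (q ^ d) := by
      intro x; rw [hσdef, iterateFrobenius_def, pow_mul, hpq]
    have hσF : ∀ r : F, σ (r : K) = (r : K) := fun r => by rw [hσq]; exact hfix _ r.2 d
    have hσc : σ c = c := by rw [hσq]; exact hcqd
    by_cases hc1 : c = 1
    · have heq2 : θ - (r₁ : K) = θ - (r₂ : K) := by rw [← hc2, hc1, one_mul]
      have hr12 : (r₁ : K) = r₂ := by linear_combination -heq2
      exact Subtype.ext hr12
    · exfalso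
      have hθeq : θ * (1 - c) = (r₁ : K) - c * r₂ := by linear_combination -hc2
      have h1c : (1 : K) - c ≠ 0 := by
        intro h0; apply hc1; linear_combination -h0
      have hθval : θ = ((r₁ : K) - c * r₂) / (1 - c) := by
        rw [eq_div_iff h1c]; linear_combination hθeq
      have hσθ : σ θ = θ := by
        conv_lhs => rw [hθval]
        rw [map_div₀, map_sub, map_sub, map_mul, map_one, hσc, hσF r₁, hσF r₂, ← hθval]
      have hθqd : θ ^ (q ^ d) = θ := by rw [← hσq]; exact hσθ
      have hqd2 : 1 < q ^ d := Nat.one_lt_pow hd0.ne' (by omega)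
      have h2 : θ ^ (q ^ d - 1) * θ = 1 * θ := by
        rw [← pow_succ, one_mul]
        have h3 : q ^ d - 1 + 1 = q ^ d := by omega
        rw [h3, hθqd]
      have h3 : θ ^ (q ^ d - 1) = 1 := mul_right_cancel₀ hθ0 h2
      have h4 : M ∣ q ^ d - 1 := hord ▸ orderOf_dvd_of_pow_eq_one h3
      have h5 : M ≤ q ^ d - 1 := Nat.le_of_dvd (by omega) h4
      omega
  -- the set A
  set A : Set (ZMod N) := Set.range (fun r : F => π (lfun r)) with hAdef
  have hAcard : A.ncard = q := by
    rw [hAdef, ← Nat.card_coe_set_eq, Nat.card_range_of_injective hπinj, hFcard]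
  -- fibers of π all have size g
  have hsame : ∀ b : ZMod N, (Finset.univ.filter fun y : ZMod M => π y = b).card
      = (Finset.univ.filter fun y : ZMod M => π y = 0).card := by
    intro b
    have hy₀ : π ((b.val : ZMod M)) = b := by
      rw [map_natCast]
      exact ZMod.natCast_rightInverse b
    refine Finset.card_bij' (fun y _ => y - (b.val : ZMod M)) (fun z _ => z + (b.val : ZMod M))
      ?_ ?_ ?_ ?_
    · intro y hy
      rw [Finset.mem_filter] at hy ⊢
      refine ⟨Finset.mem_univ _, ?_⟩
      rw [map_sub, hy.2, hy₀, sub_self]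
    · intro z hz
      rw [Finset.mem_filter] at hz ⊢
      refine ⟨Finset.mem_univ _, ?_⟩
      rw [map_add, hz.2, hy₀, zero_add]
    · intro y _; ring
    · intro z _; ring
  have hfib : ∀ b : ZMod N, (Finset.univ.filter fun y : ZMod M => π y = b).card = g := by
    intro b
    have htot : (Finset.univ : Finset (ZMod M)).card
        = ∑ b : ZMod N, (Finset.univ.filter fun y : ZMod M => π y = b).card :=
      Finset.card_eq_sum_card_fiberwise (fun x _ => Finset.mem_univ _)
    rw [Finset.card_univ, ZMod.card,
      Finset.sum_congr rfl (fun b _ => hsame b), Finset.sum_const, Finset.card_univ, ZMod.card,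
      smul_eq_mul] at htot
    have h2 : N * (Finset.univ.filter fun y : ZMod M => π y = 0).card = N * g := by
      rw [← htot, ← hMN]
    have hc0 := Nat.eq_of_mul_eq_mul_left hN0 h2
    rw [hsame b, hc0]
  -- the B_h[g] property
  refine ⟨A, ?_, hAcard⟩
  intro b s hs
  set rfun : ZMod N → F := fun x => if hx : ∃ r : F, π (lfun r) = x then hx.choose else 0
    with hrfundef
  have hrspec : ∀ x ∈ A, π (lfun (rfun x)) = x := by
    intro x hx
    obtain ⟨r, hr⟩ := hx
    have hex : ∃ r : F, π (lfun r) = x := ⟨r, hr⟩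
    rw [hrfundef]
    dsimp only
    rw [dif_pos hex]
    exact hex.choose_spec
  set Y : Multiset (ZMod N) → ZMod M := fun m => (m.map (fun x => lfun (rfun x))).sum
    with hYdef
  have hYπ : ∀ m ∈ s, π (Y m) = b := by
    intro m hm
    obtain ⟨hcard, hmem, hsum⟩ := hs m hm
    rw [hYdef]
    dsimp only
    rw [map_multiset_sum, Multiset.map_map]
    have h1 : m.map (π ∘ fun x => lfun (rfun x)) = m.map id :=
      Multiset.map_congr rfl fun x hx => hrspec x (hmem x hx)
    rw [h1, Multiset.map_id, hsum]
  have hYE : ∀ m : Multiset (ZMod N),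
      E (Y m) = ((m.map rfun).map (fun r : F => θ - (r : K))).prod := by
    intro m
    rw [hYdef]
    dsimp only
    rw [hEsum, Multiset.map_map, Multiset.map_map]
    exact congrArg Multiset.prod (Multiset.map_congr rfl fun x _ => hlspec (rfun x))
  have hinj : Set.InjOn Y ↑s := by
    intro m₁ hm₁ m₂ hm₂ hY
    obtain ⟨hc₁, hmem₁, -⟩ := hs m₁ hm₁
    obtain ⟨hc₂, hmem₂, -⟩ := hs m₂ hm₂
    have hE := congrArg E hY
    rw [hYE m₁, hYE m₂] at hE
    have hms : m₁.map rfun = m₂.map rfun :=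
      BC_multiset_eq F θ hgen hfinrank _ _ (by rw [Multiset.card_map, hc₁])
        (by rw [Multiset.card_map, hc₂]) hE
    have hrec : ∀ m : Multiset (ZMod N), (∀ x ∈ m, x ∈ A) →
        (m.map rfun).map (fun r : F => π (lfun r)) = m := by
      intro m hmem
      rw [Multiset.map_map]
      calc m.map ((fun r : F => π (lfun r)) ∘ rfun) = m.map id :=
            Multiset.map_congr rfl fun x hx => hrspec x (hmem x hx)
      _ = m := Multiset.map_id m
    rw [← hrec m₁ hmem₁, ← hrec m₂ hmem₂, hms]
  have hmaps : ∀ m ∈ s, Y m ∈ Finset.univ.filter fun y : ZMod M => π y = b := by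
    intro m hm
    rw [Finset.mem_filter]
    exact ⟨Finset.mem_univ _, hYπ m hm⟩
  have hcardle := Finset.card_le_card_of_injOn Y hmaps hinj
  rwa [hfib b] at hcardle
end BC
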